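/- Let A be a pointed category with kernels and cokernels. Given composable arrows g : B → C and h : C → D, if the composite g·h is proper and h is a monomorphism, then g is proper; moreover the canonical factorizations of g·h and of g through the kernels of their cokernels coincide up to a (unique) isomorphism Ker(c_{g·h}) ≅ Ker(c_g) compatible with the inclusions into D and C. -/

import Mathlib

open CategoryTheory CategoryTheory.Limits

noncomputable section

universe v u

variable {A : Type u} [Category.{v} A] [HasZeroMorphisms A] [HasKernels A] [HasCokernels A]

/-- The canonical factorization of an arrow through the kernel of its cokernel. -/
def properFact {X Y : A} (u : X ⟶ Y) : X ⟶ kernel (cokernel.π u) :=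
  kernel.lift (cokernel.π u) u (cokernel.condition u)

/-- An arrow is proper if its canonical factorization through the kernel of its
cokernel is a regular epimorphism. -/
def IsProper {X Y : A} (u : X ⟶ Y) : Prop :=
  Nonempty (RegularEpi (properFact u))

/-- **Statement 19** (Lemma: properness descends along post-composition with a mono).
Let `A` be a pointed category with kernels and cokernels.  If `g ≫ h` is proper and `h`
is a monomorphism, then `g` is proper; moreover the canonical factorizations of `g ≫ h`
and of `g` through the kernels of their cokernels coincide up to a unique isomorphism
`Ker(c_g) ≅ Ker(c_{g ≫ h})` compatible with the inclusions into `D` and `C`. -/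
theorem proper_of_comp_mono
    (A : Type u) [Category.{v} A] [HasZeroObject A] [HasZeroMorphisms A]
    [HasKernels A] [HasCokernels A]
    {B C D : A} (g : B ⟶ C) (h : C ⟶ D)
    (hp : IsProper (g ≫ h)) (hm : Mono h) :
    IsProper g ∧
    ∃! e : kernel (cokernel.π g) ≅ kernel (cokernel.π (g ≫ h)),
      properFact g ≫ e.hom = properFact (g ≫ h) ∧
      e.hom ≫ kernel.ι (cokernel.π (g ≫ h)) = kernel.ι (cokernel.π g) ≫ h := by
  obtain ⟨re⟩ := hp
  haveI := RegularEpi.epi _ re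
  have hq : properFact (g ≫ h) ≫ kernel.ι (cokernel.π (g ≫ h)) = g ≫ h :=
    kernel.lift_ι _ _ _
  have hg : properFact g ≫ kernel.ι (cokernel.π g) = g := kernel.lift_ι _ _ _
  -- left/right coequalize properFact g
  have w' : re.left ≫ properFact g = re.right ≫ properFact g := by
    have h1 : re.left ≫ (g ≫ h) = re.right ≫ (g ≫ h) := by
      have := re.w =≫ kernel.ι (cokernel.π (g ≫ h))
      simpa only [Category.assoc, hq] using this
    have h2 : re.left ≫ g = re.right ≫ g := by
      rw [← cancel_mono h]; simpa [Category.assoc] using h1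
    rw [← cancel_mono (kernel.ι (cokernel.π g))]
    simpa [Category.assoc, hg] using h2
  -- the map e_hom : Ker(c_g) → Ker(c_{g≫h})
  have hz : (kernel.ι (cokernel.π g) ≫ h) ≫ cokernel.π (g ≫ h) = 0 := by
    have hw : h ≫ cokernel.π (g ≫ h) =
        cokernel.π g ≫ cokernel.desc g (h ≫ cokernel.π (g ≫ h))
          (by rw [← Category.assoc]; exact cokernel.condition _) :=
      (cokernel.π_desc _ _ _).symm
    rw [Category.assoc, hw, ← Category.assoc, kernel.condition, zero_comp]
  set ehom : kernel (cokernel.π g) ⟶ kernel (cokernel.π (g ≫ h)) :=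
    kernel.lift _ (kernel.ι (cokernel.π g) ≫ h) hz with hehom
  have he1 : ehom ≫ kernel.ι (cokernel.π (g ≫ h)) = kernel.ι (cokernel.π g) ≫ h :=
    kernel.lift_ι _ _ _
  -- inverse via coequalizer
  obtain ⟨einv, heinv⟩ := Cofork.IsColimit.desc' re.isColimit (properFact g) w'
  simp only [Cofork.π_ofπ] at heinv
  have hinv1 : einv ≫ kernel.ι (cokernel.π g) ≫ h = kernel.ι (cokernel.π (g ≫ h)) := by
    rw [← cancel_epi (properFact (g ≫ h))]
    rw [← Category.assoc, heinv, ← Category.assoc, hg, hq]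
  have hcomp1 : properFact g ≫ ehom = properFact (g ≫ h) := by
    rw [← cancel_mono (kernel.ι (cokernel.π (g ≫ h))), Category.assoc, he1,
      ← Category.assoc, hg, hq]
  have hii : ehom ≫ einv = 𝟙 _ := by
    rw [← cancel_mono (kernel.ι (cokernel.π g)), ← cancel_mono h]
    simp only [Category.assoc, hinv1, Category.id_comp, he1]
  have hii' : einv ≫ ehom = 𝟙 _ := by
    rw [← cancel_epi (properFact (g ≫ h)), ← Category.assoc, heinv, hcomp1]
    simp
  set e : kernel (cokernel.π g) ≅ kernel (cokernel.π (g ≫ h)) :=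
    ⟨ehom, einv, hii, hii'⟩ with hedef
  have colim : IsColimit (Cofork.ofπ (properFact g) w') :=
    IsColimit.ofIsoColimit re.isColimit
      (Cofork.ext e.symm (by simpa [hedef] using heinv))
  refine ⟨⟨⟨re.W, re.left, re.right, w', colim⟩⟩, e, ⟨hcomp1, he1⟩, ?_⟩
  intro e' ⟨h1', h2'⟩
  ext1
  rw [← cancel_mono (kernel.ι (cokernel.π (g ≫ h))), h2', hedef]
  exact he1.symm
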